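/- Let |ψ⟩ = a0|00⟩ + a1|11⟩ and |φ⟩ = b0|00⟩ + b1|11⟩ be vectors in ℂ²⊗ℂ² with a0 ≥ a1 ≥ 0, b0 ≥ b1 ≥ 0, a0² + a1² = 1 and b0² + b1² = 1. Then there exist 2×2 unitary matrices U1, U2 with |φ⟩ = (U1⊗U2)|ψ⟩ if and only if b0 = a0 and b1 = a1. -/

import Mathlib

open Matrix Kronecker


/-- The vector `a0|00⟩ + a1|11⟩` in `ℂ² ⊗ ℂ²`. -/
noncomputable def schmidtVec (a0 a1 : ℝ) : Fin 2 × Fin 2 → ℂ :=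
  fun p => if p = (0, 0) then (a0 : ℂ) else if p = (1, 1) then (a1 : ℂ) else 0

/-- **Corollary.** Two pure states in Schmidt form `a0|00⟩ + a1|11⟩` and
`b0|00⟩ + b1|11⟩`, with ordered nonnegative Schmidt coefficients, are local unitary
equivalent iff their Schmidt coefficients coincide. -/
theorem pure_schmidt_LU_iff (a0 a1 b0 b1 : ℝ)
    (ha0 : a1 ≤ a0) (ha1 : 0 ≤ a1) (hb0 : b1 ≤ b0) (hb1 : 0 ≤ b1)
    (hna : a0 ^ 2 + a1 ^ 2 = 1) (hnb : b0 ^ 2 + b1 ^ 2 = 1) :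
    (∃ U1 U2 : Matrix (Fin 2) (Fin 2) ℂ,
        U1 ∈ Matrix.unitaryGroup (Fin 2) ℂ ∧ U2 ∈ Matrix.unitaryGroup (Fin 2) ℂ ∧
        schmidtVec b0 b1 = (U1 ⊗ₖ U2).mulVec (schmidtVec a0 a1)) ↔
      b0 = a0 ∧ b1 = a1 := by
  have ha0' : (0:ℝ) ≤ a0 := le_trans ha1 ha0
  have hb0' : (0:ℝ) ≤ b0 := le_trans hb1 hb0
  constructor
  · rintro ⟨U1, U2, hU1, hU2, h⟩
    have key : (!![(b0:ℂ),0;0,(b1:ℂ)]) = U1 * !![(a0:ℂ),0;0,(a1:ℂ)] * U2ᵀ := by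
      ext i j
      have h' := congrFun h (i, j)
      simp only [Matrix.mulVec, dotProduct, Fintype.sum_prod_type,
        Fin.sum_univ_two, kroneckerMap_apply, schmidtVec] at h'
      fin_cases i <;> fin_cases j <;>
        simp [Matrix.mul_apply, Fin.sum_univ_two] at h' ⊢ <;>
        linear_combination h'
    have hdet : (!![(b0:ℂ),0;0,(b1:ℂ)]).det
        = U1.det * (!![(a0:ℂ),0;0,(a1:ℂ)]).det * U2.det := by
      rw [key]
      simp [Matrix.det_mul]
    have habs : ∀ U : Matrix (Fin 2) (Fin 2) ℂ, U ∈ Matrix.unitaryGroup (Fin 2) ℂ →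
        ‖U.det‖ = 1 := by
      intro U hU
      have hdu := Matrix.det_of_mem_unitary hU
      rw [Unitary.mem_iff] at hdu
      have h1 : (starRingEnd ℂ) U.det * U.det = 1 := hdu.1
      have h2 : Complex.normSq U.det = 1 := by
        have := congrArg Complex.re h1
        simpa [Complex.normSq_apply, Complex.mul_re, Complex.conj_re, Complex.conj_im]
          using this
      rw [← Complex.sq_norm] at h2
      nlinarith [norm_nonneg U.det]
    have hprod : b0 * b1 = a0 * a1 := by
      have h3 := congrArg (‖·‖) hdet
      rw [Matrix.det_fin_two_of, Matrix.det_fin_two_of] at h3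
      simp only [mul_zero, zero_mul, sub_zero, norm_mul, habs U1 hU1, habs U2 hU2,
        one_mul, mul_one, Complex.norm_real, Real.norm_eq_abs] at h3
      rw [abs_of_nonneg hb0', abs_of_nonneg hb1, abs_of_nonneg ha0',
        abs_of_nonneg ha1] at h3
      exact h3
    have h1 : (b0+b1)^2 = (a0+a1)^2 := by linear_combination hnb - hna + 2*hprod
    have h2 : (b0-b1)^2 = (a0-a1)^2 := by linear_combination hnb - hna - 2*hprod
    have hs : b0 + b1 = a0 + a1 :=
      le_antisymm (by nlinarith) (by nlinarith)
    have hd : b0 - b1 = a0 - a1 :=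
      le_antisymm (by nlinarith) (by nlinarith)
    exact ⟨by linarith, by linarith⟩
  · rintro ⟨rfl, rfl⟩
    exact ⟨1, 1, Submonoid.one_mem _, Submonoid.one_mem _, by
      simp [Matrix.one_kronecker_one]⟩
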